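/- Let L be a positive integer and M ≥ 1 an integer. For each integer N ≥ 0 let r_{L,N} denote the unique real polynomial of degree at most L + N − 1 (degree at most L − 1 when N = 0) satisfying r(1−y) s_{L,N}(1−y) + r(y) s_{L,N}(y) = (2L+1)² 2^{−2L−2N+1} for all y. Then for all y ∈ ℝ: 4 y · r_{L,M}(y) = r_{L,M−1}(y) − 2^{−2L} · r_{L,M−1}(0) · (1 − 2y) · s_{L,M−1}(1−y). -/

import Mathlib

open Polynomial Finset


lemma sum_range_two_mul' {M : Type*} [AddCommMonoid M] (N : ℕ) (f : ℕ → M) :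
    ∑ k ∈ range (2 * N), f k = ∑ n ∈ range N, (f (2 * n) + f (2 * n + 1)) := by
  induction N with
  | zero => simp
  | succ n ih =>
      rw [Nat.mul_succ, show 2*n+2 = (2*n+1)+1 from rfl, sum_range_succ, sum_range_succ,
        sum_range_succ, ← ih]
      abel

lemma key_identity {R : Type*} [CommRing R] (L : ℕ) (w : R) :
    (1 + w) ^ (2 * L + 1) + (1 - w) ^ (2 * L + 1) =
      2 * ∑ n ∈ range (L + 1), ((2 * L + 1).choose (2 * n) : R) * w ^ (2 * n) := by
  have h1 : (1 + w) ^ (2 * L + 1)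
      = ∑ k ∈ range (2 * L + 2), w ^ k * ((2 * L + 1).choose k : R) := by
    rw [add_comm 1 w]
    simpa using add_pow w 1 (2 * L + 1)
  have h2 : (1 - w) ^ (2 * L + 1)
      = ∑ k ∈ range (2 * L + 2), (-w) ^ k * ((2 * L + 1).choose k : R) := by
    rw [sub_eq_add_neg, add_comm 1 (-w)]
    simpa using add_pow (-w) 1 (2 * L + 1)
  rw [h1, h2, ← Finset.sum_add_distrib, show 2 * L + 2 = 2 * (L + 1) from rfl,
    sum_range_two_mul']
  rw [Finset.mul_sum]
  refine Finset.sum_congr rfl fun n _ => ?_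
  have he : (-w) ^ (2 * n) = w ^ (2 * n) := (even_two_mul n).neg_pow w
  have ho : (-w) ^ (2 * n + 1) = -(w ^ (2 * n + 1)) := (odd_two_mul_add_one n).neg_pow w
  rw [he, ho]
  ring

lemma T_eval_pos (L : ℕ) (x : ℝ) (hx : 0 ≤ x) :
    0 < ∑ n ∈ range (L + 1), ((2 * L + 1).choose (2 * n) : ℝ) * x ^ n := by
  apply Finset.sum_pos' (fun i _ => by positivity)
  refine ⟨0, Finset.mem_range.2 (Nat.succ_pos _), by simp⟩

lemma root_neg (L : ℕ) (z : ℂ)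
    (hz : ∑ n ∈ range (L + 1), ((2 * L + 1).choose (2 * n) : ℂ) * z ^ n = 0) :
    ∃ x : ℝ, x < 0 ∧ z = (x : ℂ) := by
  have hz0 : z ≠ 0 := by
    rintro rfl
    rw [Finset.sum_range_succ'] at hz
    simp at hz
  obtain ⟨w, hw⟩ := IsAlgClosed.exists_pow_nat_eq z (n := 2) zero_lt_two
  have hkey : (1 + w) ^ (2 * L + 1) + (1 - w) ^ (2 * L + 1) = 0 := by
    rw [key_identity L w]
    have : ∑ n ∈ range (L + 1), ((2 * L + 1).choose (2 * n) : ℂ) * w ^ (2 * n)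
        = ∑ n ∈ range (L + 1), ((2 * L + 1).choose (2 * n) : ℂ) * z ^ n := by
      refine Finset.sum_congr rfl fun n _ => ?_
      rw [pow_mul, hw]
    rw [this, hz, mul_zero]
  have h2 : ‖1 + w‖ ^ (2 * L + 1) = ‖1 - w‖ ^ (2 * L + 1) := by
    rw [← norm_pow, ← norm_pow, show (1+w)^(2*L+1) = -((1-w)^(2*L+1)) by linear_combination hkey,
      norm_neg]
  have habs : ‖1 + w‖ = ‖1 - w‖ := by
    rcases lt_trichotomy (‖1 + w‖) (‖1 - w‖) with h | h | h
    · exact absurd h2 (ne_of_lt (pow_lt_pow_left₀ h (norm_nonneg _) (by omega)))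
    · exact h
    · exact absurd h2.symm (ne_of_lt (pow_lt_pow_left₀ h (norm_nonneg _) (by omega)))
  have hre : w.re = 0 := by
    have := congrArg (· ^ 2) habs
    simp only [Complex.sq_norm, Complex.normSq_apply, Complex.add_re, Complex.add_im,
      Complex.sub_re, Complex.sub_im, Complex.one_re, Complex.one_im] at this
    nlinarith [this]
  have him : w.im ≠ 0 := by
    intro h
    apply hz0
    rw [← hw]
    have : w = 0 := Complex.ext hre h
    simp [this]
  refine ⟨-(w.im ^ 2), neg_neg_iff_pos.mpr (by positivity), ?_⟩
  rw [← hw]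
  apply Complex.ext <;>
    simp [pow_two, Complex.mul_re, Complex.mul_im, hre] <;> ring

/-- The real polynomial `s_{L,N}(y) = y^N ∑_{n=0}^{L} C(2L+1, 2n) y^n`. -/
noncomputable def sPoly (L N : ℕ) : Polynomial ℝ :=
  Polynomial.X ^ N *
    ∑ n ∈ Finset.range (L + 1),
      Polynomial.C ((Nat.choose (2 * L + 1) (2 * n) : ℝ)) * Polynomial.X ^ n

lemma sPoly_eval (L N : ℕ) (x : ℝ) :
    (sPoly L N).eval x = x ^ N * ∑ n ∈ range (L + 1), ((2 * L + 1).choose (2 * n) : ℝ) * x ^ n := by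
  simp [sPoly, eval_finset_sum]

lemma sPoly_map_eval (L N : ℕ) (z : ℂ) :
    ((sPoly L N).map (algebraMap ℝ ℂ)).eval z
      = z ^ N * ∑ n ∈ range (L + 1), ((2 * L + 1).choose (2 * n) : ℂ) * z ^ n := by
  simp [sPoly, Polynomial.map_mul, Polynomial.map_pow, Polynomial.map_sum, eval_finset_sum]

lemma T_cast_eval (L : ℕ) (x : ℝ) :
    ∑ n ∈ range (L + 1), ((2 * L + 1).choose (2 * n) : ℂ) * (x : ℂ) ^ n
      = ((∑ n ∈ range (L + 1), ((2 * L + 1).choose (2 * n) : ℝ) * x ^ n : ℝ) : ℂ) := by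
  push_cast
  rfl

lemma sPoly_map_ne_zero_of_pos (L N : ℕ) (x : ℝ) (hx : 0 < x) :
    ((sPoly L N).map (algebraMap ℝ ℂ)).eval (x : ℂ) ≠ 0 := by
  rw [sPoly_map_eval, T_cast_eval]
  have h1 : (x : ℂ) ^ N ≠ 0 := pow_ne_zero _ (by exact_mod_cast hx.ne')
  have h2 := T_eval_pos L x hx.le
  exact mul_ne_zero h1 (by exact_mod_cast h2.ne')

lemma no_common_root (L N : ℕ) (z : ℂ)
    (h1 : ((sPoly L N).map (algebraMap ℝ ℂ)).eval z = 0)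
    (h2 : ((sPoly L N).map (algebraMap ℝ ℂ)).eval (1 - z) = 0) : False := by
  by_cases hz : z = 0
  · exact sPoly_map_ne_zero_of_pos L N 1 one_pos (by simpa [hz] using h2)
  · rw [sPoly_map_eval] at h1
    rcases mul_eq_zero.mp h1 with h | h
    · exact hz (pow_eq_zero_iff'.mp h).1
    · obtain ⟨x, hx, rfl⟩ := root_neg L z h
      have : ((1 : ℝ) : ℂ) - (x : ℂ) = ((1 - x : ℝ) : ℂ) := by push_cast; ring
      apply sPoly_map_ne_zero_of_pos L N (1 - x) (by linarith)
      simpa [this] using h2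

lemma sPoly_isCoprime (L N : ℕ) :
    IsCoprime (sPoly L N) ((sPoly L N).comp (1 - X)) := by
  by_contra hcop
  classical
  set S := sPoly L N with hS
  set g := EuclideanDomain.gcd S (S.comp (1 - X)) with hg
  have hgu : ¬ IsUnit g := fun h => hcop (EuclideanDomain.gcd_isUnit_iff.mp h)
  have hS0 : S ≠ 0 := by
    intro h
    have := sPoly_map_ne_zero_of_pos L N 1 one_pos
    rw [← hS, h] at this
    simp at this
  have hg0 : g ≠ 0 := by
    intro h
    exact hS0 ((EuclideanDomain.gcd_eq_zero_iff.mp h).1)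
  have hdeg : 0 < g.degree := by
    rcases lt_or_eq_of_le (Polynomial.zero_le_degree_iff.mpr hg0) with h | h
    · exact h
    · exact absurd (Polynomial.isUnit_iff_degree_eq_zero.mpr h.symm) hgu
  have hdegC : 0 < (g.map (algebraMap ℝ ℂ)).degree := by
    rwa [Polynomial.degree_map]
  obtain ⟨z, hz⟩ := Complex.exists_root hdegC
  have hd1 : g ∣ S := EuclideanDomain.gcd_dvd_left _ _
  have hd2 : g ∣ S.comp (1 - X) := EuclideanDomain.gcd_dvd_right _ _
  have hz1 : (S.map (algebraMap ℝ ℂ)).eval z = 0 := by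
    obtain ⟨k, hk⟩ := hd1
    rw [hk, Polynomial.map_mul, eval_mul, hz.eq_zero, zero_mul]
  have hz2 : (S.map (algebraMap ℝ ℂ)).eval (1 - z) = 0 := by
    obtain ⟨k, hk⟩ := hd2
    have : (S.comp (1 - X)).map (algebraMap ℝ ℂ) = (g.map (algebraMap ℝ ℂ)) * (k.map (algebraMap ℝ ℂ)) := by
      rw [hk, Polynomial.map_mul]
    have h3 := congrArg (Polynomial.eval z) this
    rw [Polynomial.map_comp] at h3
    simp only [eval_mul, hz.eq_zero, zero_mul, eval_comp, Polynomial.map_sub,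
      Polynomial.map_one, Polynomial.map_X, eval_sub, eval_one, eval_X] at h3
    exact h3
  exact no_common_root L N z hz1 hz2

lemma T_one (L : ℕ) :
    ∑ n ∈ range (L + 1), ((2 * L + 1).choose (2 * n) : ℝ) * (1:ℝ) ^ n = 2 ^ (2 * L) := by
  have h := key_identity L (1 : ℝ)
  norm_num at h
  have he : ∑ n ∈ range (L + 1), ((2 * L + 1).choose (2 * n) : ℝ) * (1:ℝ) ^ n
      = ∑ n ∈ range (L + 1), ((2 * L + 1).choose (2 * n) : ℝ) := by simp
  rw [he]
  have h2 : (2:ℝ) ^ (2 * L + 1) = 2 * 2 ^ (2 * L) := by rw [pow_succ]; ring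
  linarith

/-- recursive relation between the Bezout solutions `r_{L,M}` and
`r_{L,M-1}`:
`4 y r_{L,M}(y) = r_{L,M-1}(y) - 2^{-2L} r_{L,M-1}(0) (1 - 2y) s_{L,M-1}(1-y)`. -/
theorem bezout_recursion (L M : ℕ) (hL : 0 < L) (hM : 1 ≤ M)
    (rM rM' : Polynomial ℝ)
    (hdegM : rM.natDegree ≤ L + M - 1)
    (hdegM' : rM'.natDegree ≤ L + (M - 1) - 1)
    (hrM : ∀ y : ℝ,
      rM.eval (1 - y) * (sPoly L M).eval (1 - y) + rM.eval y * (sPoly L M).eval y =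
        (2 * (L : ℝ) + 1) ^ 2 * (2 : ℝ) ^ (-(2 * (L : ℤ)) - 2 * (M : ℤ) + 1))
    (hrM' : ∀ y : ℝ,
      rM'.eval (1 - y) * (sPoly L (M - 1)).eval (1 - y) +
          rM'.eval y * (sPoly L (M - 1)).eval y =
        (2 * (L : ℝ) + 1) ^ 2 * (2 : ℝ) ^ (-(2 * (L : ℤ)) - 2 * ((M : ℤ) - 1) + 1)) :
    ∀ y : ℝ,
      4 * y * rM.eval y =
        rM'.eval y -
          (2 : ℝ) ^ (-(2 * (L : ℤ))) * rM'.eval 0 * (1 - 2 * y) *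
            (sPoly L (M - 1)).eval (1 - y) := by
  obtain ⟨m, rfl⟩ : ∃ m, M = m + 1 := ⟨M - 1, (Nat.succ_pred_eq_of_pos hM).symm⟩
  simp only [Nat.add_sub_cancel] at hdegM' hrM' ⊢
  set S : Polynomial ℝ := sPoly L m with hSdef
  set Sc : Polynomial ℝ := S.comp (1 - X) with hScdef
  set c : ℝ := (2 : ℝ) ^ (-(2 * (L : ℤ))) * rM'.eval 0 with hcdef
  set F : Polynomial ℝ := 4 * X * rM - rM' + C c * (1 - 2 * X) * Sc with hFdef
  have hFeval : ∀ y : ℝ,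
      F.eval y = 4 * y * rM.eval y - rM'.eval y + c * (1 - 2 * y) * S.eval (1 - y) := by
    intro y
    simp [hFdef, hScdef, eval_comp]
  have hSM : sPoly L (m + 1) = X * S := by
    rw [hSdef]
    unfold sPoly
    ring
  have hH : ∀ y : ℝ, F.eval (1 - y) * S.eval (1 - y) + F.eval y * S.eval y = 0 := by
    intro y
    have h1 := hrM y
    rw [hSM] at h1
    simp only [eval_mul, eval_X] at h1
    have h2 := hrM' y
    push_cast at h1 h2
    have hpow : (2 : ℝ) ^ (-(2 * (L : ℤ)) - 2 * (((m : ℤ) + 1) - 1) + 1)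
        = 4 * (2 : ℝ) ^ (-(2 * (L : ℤ)) - 2 * ((m : ℤ) + 1) + 1) := by
      rw [show (-(2 * (L : ℤ)) - 2 * (((m : ℤ) + 1) - 1) + 1)
          = (-(2 * (L : ℤ)) - 2 * ((m : ℤ) + 1) + 1) + 2 by ring, zpow_add₀ (two_ne_zero)]
      norm_num
      ring
    rw [hFeval y, hFeval (1 - y)]
    have hy : (1:ℝ) - (1 - y) = y := by ring
    rw [hy]
    linear_combination (4 : ℝ) * h1 - h2 - (2 * (L : ℝ) + 1) ^ 2 * hpow
  have hG : F.comp (1 - X) * Sc + F * S = 0 := by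
    apply Polynomial.funext
    intro y
    simp only [eval_add, eval_mul, eval_comp, eval_sub, eval_one, eval_X, hScdef, eval_zero]
    linarith [hH y]
  have hcop : IsCoprime S Sc := sPoly_isCoprime L m
  have hdvd : Sc ∣ F * S := by
    exact ⟨-(F.comp (1 - X)), by linear_combination hG⟩
  obtain ⟨q, hFq⟩ : Sc ∣ F := hcop.symm.dvd_of_dvd_mul_right hdvd
  have hinv : ((1 - X : Polynomial ℝ)).comp (1 - X) = X := by
    simp [sub_comp]
  have hScc : Sc.comp (1 - X) = S := by
    rw [hScdef, Polynomial.comp_assoc, hinv, comp_X]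
  have hqzero0 : S * Sc * (q.comp (1 - X) + q) = 0 := by
    have e1 : F.comp (1 - X) = S * q.comp (1 - X) := by
      rw [hFq, mul_comp, hScc]
    rw [e1, hFq] at hG
    linear_combination hG
  have hT1 : (0:ℝ) < ∑ n ∈ range (L + 1), ((2 * L + 1).choose (2 * n) : ℝ) * (1:ℝ) ^ n :=
    T_eval_pos L 1 (by norm_num)
  have hSeval1 : S.eval 1 ≠ 0 := by
    rw [hSdef, sPoly_eval]
    simp only [one_pow, one_mul]
    exact ne_of_gt (by simpa using hT1)
  have hS0 : S ≠ 0 := by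
    intro h
    rw [h] at hSeval1
    simp at hSeval1
  have hSc0 : Sc ≠ 0 := by
    intro h
    apply hSeval1
    have h2 := congrArg (Polynomial.eval (0:ℝ)) h
    rw [hScdef] at h2
    simpa [eval_comp] using h2
  have hqsum : q.comp (1 - X) + q = 0 := by
    rcases mul_eq_zero.mp hqzero0 with h | h
    · exact absurd h (mul_ne_zero hS0 hSc0)
    · exact h
  have hF : F = 0 := by
    by_contra hF0
    have hq : q ≠ 0 := fun h => hF0 (by rw [hFq, h, mul_zero])
    have hdegT : (∑ n ∈ range (L + 1),
        C ((Nat.choose (2 * L + 1) (2 * n) : ℝ)) * X ^ n).natDegree = L := by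
      apply le_antisymm
      · apply Polynomial.natDegree_sum_le_of_forall_le
        intro n hn
        apply (Polynomial.natDegree_C_mul_le _ _).trans
        simpa using Nat.lt_succ_iff.mp (Finset.mem_range.mp hn)
      · apply Polynomial.le_natDegree_of_ne_zero
        rw [Polynomial.finset_sum_coeff]
        have hco : ∀ n ∈ range (L + 1),
            (C ((Nat.choose (2 * L + 1) (2 * n) : ℝ)) * X ^ n).coeff L
              = if L = n then ((2 * L + 1).choose (2 * n) : ℝ) else 0 := by
          intro n hn
          rw [Polynomial.coeff_C_mul, Polynomial.coeff_X_pow]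
          split_ifs with h <;> simp [h]
        rw [Finset.sum_congr rfl hco, Finset.sum_ite_eq]
        simp only [Finset.mem_range, Nat.lt_succ_iff, le_refl, if_true]
        exact_mod_cast (Nat.choose_pos (by omega : 2 * L ≤ 2 * L + 1)).ne'
    have hdegS : S.natDegree = m + L := by
      rw [hSdef]
      unfold sPoly
      rw [Polynomial.natDegree_mul (pow_ne_zero _ Polynomial.X_ne_zero) (fun h => by
        rw [h] at hdegT
        simp only [natDegree_zero] at hdegT
        omega), natDegree_X_pow, hdegT]
    have hdegSc : Sc.natDegree = m + L := by
      rw [hScdef, natDegree_comp, hdegS]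
      have h1X : (1 - X : Polynomial ℝ).natDegree = 1 := by
        rw [show (1 - X : Polynomial ℝ) = -(X - C 1) by simp [sub_eq_add_neg],
          natDegree_neg, natDegree_X_sub_C]
      rw [h1X, mul_one]
    have hdegF : F.natDegree ≤ m + L + 1 := by
      rw [hFdef]
      apply (Polynomial.natDegree_add_le _ _).trans
      simp only [max_le_iff]
      constructor
      · apply (Polynomial.natDegree_sub_le _ _).trans
        simp only [max_le_iff]
        constructor
        · apply (Polynomial.natDegree_mul_le).trans
          have h4X : (4 * X : Polynomial ℝ).natDegree ≤ 1 := by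
            apply (Polynomial.natDegree_mul_le).trans
            simp
          omega
        · omega
      · apply (Polynomial.natDegree_mul_le).trans
        have h1 : (C c * (1 - 2 * X) : Polynomial ℝ).natDegree ≤ 1 := by
          apply (Polynomial.natDegree_mul_le).trans
          have h12X : (1 - 2 * X : Polynomial ℝ).natDegree ≤ 1 := by
            apply (Polynomial.natDegree_sub_le _ _).trans
            simp only [max_le_iff, natDegree_one]
            refine ⟨by omega, ?_⟩
            apply (Polynomial.natDegree_mul_le).trans
            simp
          simpa using h12X
        omega
    have hdegq : q.natDegree ≤ 1 := by
      have hmul := Polynomial.natDegree_mul hSc0 hq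
      rw [← hFq] at hmul
      omega
    have hS1val : S.eval 1 = 2 ^ (2 * L) := by
      rw [hSdef, sPoly_eval]
      simp only [one_pow, one_mul]
      have ht := T_one L
      simpa using ht
    have hF0eval : F.eval 0 = 0 := by
      rw [hFeval 0]
      simp only [mul_zero, zero_mul, sub_zero, mul_one]
      have hc : c * S.eval 1 = rM'.eval 0 := by
        rw [hcdef, hS1val]
        rw [show ((2:ℝ) ^ (2 * L) : ℝ) = (2:ℝ) ^ ((2 * L : ℕ) : ℤ) by rw [zpow_natCast]]
        rw [mul_assoc, mul_comm (rM'.eval 0), ← mul_assoc, ← zpow_add₀ (two_ne_zero)]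
        norm_num
      linarith [hc]
    have hqe0 : q.eval 0 = 0 := by
      have h1 : F.eval 0 = Sc.eval 0 * q.eval 0 := by rw [hFq, eval_mul]
      have h2 : Sc.eval 0 = S.eval 1 := by
        rw [hScdef]; simp [eval_comp]
      rw [hF0eval] at h1
      have h3 : Sc.eval 0 ≠ 0 := by rw [h2]; exact hSeval1
      rcases mul_eq_zero.mp h1.symm with h | h
      · exact absurd h h3
      · exact h
    have hqe1 : q.eval 1 = 0 := by
      have hqs := congrArg (Polynomial.eval (1:ℝ)) hqsum
      simp only [eval_add, eval_comp, eval_sub, eval_one, eval_X, eval_zero] at hqs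
      rw [show (1:ℝ) - 1 = 0 by ring] at hqs
      linarith [hqe0, hqs]
    have hqzero : q = 0 := by
      have hc0 : q.coeff 0 = 0 := by rw [Polynomial.coeff_zero_eq_eval_zero, hqe0]
      have heval1 : q.eval 1 = q.coeff 0 + q.coeff 1 := by
        rw [Polynomial.eval_eq_sum_range' (Nat.lt_succ_of_le hdegq)]
        simp [Finset.sum_range_succ]
      have hc1 : q.coeff 1 = 0 := by rw [hqe1, hc0] at heval1; linarith
      ext i
      match i with
      | 0 => simpa using hc0
      | 1 => simpa using hc1
      | (k + 2) =>
        rw [Polynomial.coeff_eq_zero_of_natDegree_lt (by omega)]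
        simp
    exact hF0 (by rw [hFq, hqzero, mul_zero])
  intro y
  have hfin := hFeval y
  rw [hF, eval_zero] at hfin
  linarith [hfin]
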